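/- For c ≥ 7, the counts e_p(c,b) satisfy the recursion e_p(c,b) = e_p(c−2,b) + 2·e_p(c−4,b−2). -/

import Mathlib

open Classical

/-- The number of sign changes in a finite sequence of integers. -/
def signChanges (l : List ℤ) : ℕ :=
  ((l.zip l.tail).filter (fun p => p.1 * p.2 < 0)).length

/-- The sum of the absolute values of the entries. -/
def absSum (l : List ℤ) : ℕ := (l.map Int.natAbs).sum

/-- An even continued fraction representation: a nonempty even-length
sequence of nonzero integers. -/
def IsECF (l : List ℤ) : Prop :=
  l ≠ [] ∧ Even l.length ∧ ∀ x ∈ l, x ≠ 0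

/-- Palindromic or anti-palindromic sequences. -/
def IsPalOrAnti (l : List ℤ) : Prop :=
  l.reverse = l ∨ l.reverse = l.map (fun x => -x)

/-- The set `E(c)` of even continued fractions with crossing number `c`. -/
def Ecross (c : ℕ) : Set (List ℤ) :=
  {l | IsECF l ∧ (2 * absSum l : ℤ) - signChanges l = c}

/-- The set `E(c,b)` of even continued fractions with crossing number `c`
and braid index `b`. -/
def Eset (c b : ℕ) : Set (List ℤ) :=
  {l | IsECF l ∧ (2 * absSum l : ℤ) - signChanges l = c ∧
    (absSum l : ℤ) - signChanges l + 1 = b}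

noncomputable def e (c b : ℕ) : ℕ := (Eset c b).ncard

noncomputable def eTot (c : ℕ) : ℕ := (Ecross c).ncard

noncomputable def ep (c b : ℕ) : ℕ := (Eset c b ∩ {l | IsPalOrAnti l}).ncard

noncomputable def epTot (c : ℕ) : ℕ := (Ecross c ∩ {l | IsPalOrAnti l}).ncard


-- sign helpers

lemma sign_cases (x : ℤ) (hx : x ≠ 0) : x.sign = 1 ∧ 0 < x ∨ x.sign = -1 ∧ x < 0 := by
  rcases lt_or_gt_of_ne hx with h | h
  · exact Or.inr ⟨Int.sign_eq_neg_one_of_neg h, h⟩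
  · exact Or.inl ⟨Int.sign_eq_one_of_pos h, h⟩

lemma natAbs_add_sign (x : ℤ) (hx : x ≠ 0) : (x + x.sign).natAbs = x.natAbs + 1 := by
  rcases sign_cases x hx with ⟨hs, h⟩ | ⟨hs, h⟩ <;> rw [hs] <;> omega

lemma add_sign_ne_zero (x : ℤ) (hx : x ≠ 0) : x + x.sign ≠ 0 := by
  rcases sign_cases x hx with ⟨hs, h⟩ | ⟨hs, h⟩ <;> rw [hs] <;> omega

lemma mul_neg_congr (x z : ℤ) (hx : x ≠ 0) : ((x + x.sign) * z < 0 ↔ x * z < 0) := by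
  rcases sign_cases x hx with ⟨hs, h⟩ | ⟨hs, h⟩ <;> rw [hs, mul_neg_iff, mul_neg_iff] <;> omega

lemma mul_neg_congr' (x z : ℤ) (hx : x ≠ 0) : (z * (x + x.sign) < 0 ↔ z * x < 0) := by
  rw [mul_comm z _, mul_comm z x]; exact mul_neg_congr x z hx

lemma sub_sign_add_sign (x : ℤ) (hx : 2 ≤ x.natAbs) : (x - x.sign) + (x - x.sign).sign = x := by
  have hx0 : x ≠ 0 := by omega
  rcases sign_cases x hx0 with ⟨hs, h⟩ | ⟨hs, h⟩ <;> rw [hs]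
  · rw [Int.sign_eq_one_of_pos (by omega)]; ring
  · rw [Int.sign_eq_neg_one_of_neg (by omega)]; ring

lemma sub_sign_ne_zero (x : ℤ) (hx : 2 ≤ x.natAbs) : x - x.sign ≠ 0 := by
  have hx0 : x ≠ 0 := by omega
  rcases sign_cases x hx0 with ⟨hs, h⟩ | ⟨hs, h⟩ <;> rw [hs] <;> omega

lemma add_sign_inj (x y : ℤ) (hx : x ≠ 0) (hy : y ≠ 0)
    (h : x + x.sign = y + y.sign) : x = y := by
  rcases sign_cases x hx with ⟨hs, h1⟩ | ⟨hs, h1⟩ <;>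
    rcases sign_cases y hy with ⟨ht, h2⟩ | ⟨ht, h2⟩ <;> rw [hs, ht] at h <;> omega

lemma neg_add_sign (x : ℤ) : (-x) + (-x).sign = -(x + x.sign) := by
  rw [Int.sign_neg]; ring

lemma neg_sub_sign (x : ℤ) : (-x) - (-x).sign = -(x - x.sign) := by
  rw [Int.sign_neg]; ring

lemma mul_self_sign_pos (x : ℤ) (hx : x ≠ 0) : 0 < x * x.sign := by
  rcases sign_cases x hx with ⟨hs, h⟩ | ⟨hs, h⟩ <;> rw [hs] <;> omega

lemma sign_mul_self_pos (x : ℤ) (hx : x ≠ 0) : 0 < x.sign * x := by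
  rw [mul_comm]; exact mul_self_sign_pos x hx

lemma natAbs_sign (x : ℤ) (hx : x ≠ 0) : x.sign.natAbs = 1 := by
  rcases sign_cases x hx with ⟨hs, h⟩ | ⟨hs, h⟩ <;> rw [hs] <;> rfl

lemma unit_eq_sign_of_pos (x h : ℤ) (hx : x.natAbs = 1) (hpos : 0 < x * h) : x = h.sign := by
  have : x = 1 ∨ x = -1 := by omega
  rcases this with rfl | rfl
  · rw [Int.sign_eq_one_of_pos (by omega)]
  · rw [Int.sign_eq_neg_one_of_neg (by nlinarith)]

lemma unit_eq_neg_sign_of_neg (x h : ℤ) (hx : x.natAbs = 1) (hneg : x * h < 0) : x = -h.sign := by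
  have : x = 1 ∨ x = -1 := by omega
  rcases this with rfl | rfl
  · rw [Int.sign_eq_neg_one_of_neg (by omega)]; ring
  · rw [Int.sign_eq_one_of_pos (by nlinarith)]

-- signChanges / absSum
lemma signChanges_cons_cons (x h : ℤ) (t : List ℤ) :
    signChanges (x :: h :: t) = (if x * h < 0 then 1 else 0) + signChanges (h :: t) := by
  simp only [signChanges, List.tail, List.zip, List.zipWith, List.filter]
  by_cases h : x * h < 0 <;> simp [h, Nat.add_comm]

lemma signChanges_cons (x : ℤ) (l : List ℤ) (hl : l ≠ []) :
    signChanges (x :: l) = (if x * l.headI < 0 then 1 else 0) + signChanges l := by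
  cases l with
  | nil => exact absurd rfl hl
  | cons h t => exact signChanges_cons_cons x h t

lemma signChanges_append_singleton (l : List ℤ) (hl : l ≠ []) (y : ℤ) :
    signChanges (l ++ [y]) = signChanges l + (if l.getLastD 0 * y < 0 then 1 else 0) := by
  induction l with
  | nil => exact absurd rfl hl
  | cons a t ih =>
    cases t with
    | nil =>
      simp only [signChanges, List.cons_append, List.nil_append, List.zip, List.zipWith,
        List.tail, List.filter, List.getLastD]
      by_cases h : a * y < 0 <;> simp [h]
    | cons h t2 =>
      have h1 : ((h :: t2) ++ [y]) = h :: (t2 ++ [y]) := rfl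
      have h2 : (a :: h :: t2) ++ [y] = a :: ((h :: t2) ++ [y]) := rfl
      rw [h2, h1, signChanges_cons_cons, ← h1, ih (by simp), signChanges_cons_cons]
      simp [List.getLastD]
      grind

lemma absSum_cons (x : ℤ) (l : List ℤ) : absSum (x :: l) = x.natAbs + absSum l := by
  simp [absSum]

lemma absSum_append_singleton (l : List ℤ) (y : ℤ) : absSum (l ++ [y]) = absSum l + y.natAbs := by
  simp [absSum]

lemma signChanges_cons_append (x y : ℤ) (m : List ℤ) (hm : m ≠ []) :
    signChanges (x :: m ++ [y]) = signChanges m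
      + (if x * m.headI < 0 then 1 else 0) + (if m.getLastD 0 * y < 0 then 1 else 0) := by
  have h1 : x :: m ++ [y] = x :: (m ++ [y]) := rfl
  rw [h1, signChanges_cons x _ (by simp), signChanges_append_singleton m hm y]
  cases m with
  | nil => exact absurd rfl hm
  | cons h t => simp only [List.cons_append, List.headI]; grind

lemma absSum_cons_append (x y : ℤ) (m : List ℤ) :
    absSum (x :: m ++ [y]) = x.natAbs + absSum m + y.natAbs := by
  have h1 : x :: m ++ [y] = x :: (m ++ [y]) := rfl
  rw [h1, absSum_cons, absSum_append_singleton]; omega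

lemma signChanges_pair (x y : ℤ) : signChanges [x, y] = if x * y < 0 then 1 else 0 := by
  simp only [signChanges, List.zip, List.zipWith, List.tail, List.filter]
  by_cases h : x * y < 0 <;> simp [h]

lemma rev_cons_append (x y : ℤ) (m : List ℤ) :
    (x :: m ++ [y]).reverse = y :: m.reverse ++ [x] := by
  simp

lemma pal_iff (x y : ℤ) (m : List ℤ) :
    (x :: m ++ [y]).reverse = x :: m ++ [y] ↔ y = x ∧ m.reverse = m := by
  rw [rev_cons_append]
  constructor
  · intro h
    have h1 := List.head_eq_of_cons_eq h
    have h2 := List.tail_eq_of_cons_eq h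
    subst h1
    exact ⟨rfl, by simpa using h2⟩
  · rintro ⟨rfl, h⟩; rw [h]

lemma anti_iff (x y : ℤ) (m : List ℤ) :
    (x :: m ++ [y]).reverse = (x :: m ++ [y]).map (fun z => -z) ↔
      y = -x ∧ m.reverse = m.map (fun z => -z) := by
  rw [rev_cons_append]
  have : (x :: m ++ [y]).map (fun z => -z) = (-x) :: m.map (fun z => -z) ++ [-y] := by simp
  rw [this]
  constructor
  · intro h
    have h1 := List.head_eq_of_cons_eq h
    have h2 := List.tail_eq_of_cons_eq h
    refine ⟨h1, ?_⟩
    rw [h1] at h2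
    have : m.reverse ++ [x] = m.map (fun z => -z) ++ [x] := by simpa using h2
    exact (List.append_left_injective [x]) this
  · rintro ⟨rfl, h⟩; rw [h]; simp

lemma decomp_of_two_le (l : List ℤ) (hl : 2 ≤ l.length) :
    ∃ x m y, l = x :: m ++ [y] := by
  cases l with
  | nil => simp at hl
  | cons a t =>
    have ht : t ≠ [] := by
      intro h; subst h; simp at hl
    exact ⟨a, t.dropLast, t.getLast ht, by simp [List.dropLast_append_getLast ht]⟩



-- the three maps
def Pset (c b : ℕ) : Set (List ℤ) := Eset c b ∩ {l | IsPalOrAnti l}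

lemma ep_eq_Pset (c b : ℕ) : ep c b = (Pset c b).ncard := rfl

def bump (l : List ℤ) : List ℤ :=
  match l with
  | [] => []
  | x :: t => (x + x.sign) :: (t.dropLast ++ [t.getLastD 0 + (t.getLastD 0).sign])

noncomputable def extS (l : List ℤ) : List ℤ := l.headI.sign :: l ++ [(l.getLastD 0).sign]

noncomputable def extO (l : List ℤ) : List ℤ :=
  (-l.headI.sign) :: l ++ [-(l.getLastD 0).sign]

lemma bump_eq (x y : ℤ) (m : List ℤ) :
    bump (x :: m ++ [y]) = (x + x.sign) :: m ++ [y + y.sign] := by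
  show (x + x.sign) :: ((m ++ [y]).dropLast ++ [(m ++ [y]).getLastD 0 + ((m ++ [y]).getLastD 0).sign]) = _
  rw [List.dropLast_concat]
  simp

lemma headI_cons_append (x y : ℤ) (m : List ℤ) : (x :: m ++ [y]).headI = x := rfl

lemma getLastD_cons_append (x y : ℤ) (m : List ℤ) : (x :: m ++ [y]).getLastD 0 = y := by
  show (x :: (m ++ [y])).getLastD 0 = y
  rw [List.getLastD_cons]
  simp

lemma tail_headI_cons_append (x y h : ℤ) (m : List ℤ) :
    (x :: (h :: m) ++ [y]).tail.headI = h := rfl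

lemma signChanges_ends (m : List ℤ) (x x' y y' : ℤ)
    (h1 : ∀ z, x * z < 0 ↔ x' * z < 0) (h2 : ∀ z, z * y < 0 ↔ z * y' < 0) :
    signChanges (x :: m ++ [y]) = signChanges (x' :: m ++ [y']) := by
  cases m with
  | nil =>
    show signChanges [x, y] = signChanges [x', y']
    rw [signChanges_pair, signChanges_pair]
    have : x * y < 0 ↔ x' * y' < 0 := (h1 y).trans (h2 x')
    simp only [this]
  | cons h t =>
    rw [signChanges_cons_append _ _ _ (by simp), signChanges_cons_append _ _ _ (by simp)]
    simp only [h1 ((h :: t).headI), h2 ((h :: t).getLastD 0)]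

lemma mem_Pset (c b : ℕ) (l : List ℤ) :
    l ∈ Pset c b ↔ (l ≠ [] ∧ Even l.length ∧ ∀ x ∈ l, x ≠ 0) ∧
      ((2 * absSum l : ℤ) - signChanges l = c ∧ (absSum l : ℤ) - signChanges l + 1 = b) ∧
      IsPalOrAnti l := by
  constructor
  · rintro ⟨⟨h1, h2⟩, h3⟩; exact ⟨h1, h2, h3⟩
  · rintro ⟨h1, h2, h3⟩; exact ⟨⟨h1, h2⟩, h3⟩

lemma two_le_length (c b : ℕ) (l : List ℤ) (hl : l ∈ Pset c b) : 2 ≤ l.length := by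
  obtain ⟨⟨h1, h2, _⟩, _, _⟩ := (mem_Pset c b l).mp hl
  rcases h2 with ⟨k, hk⟩
  cases l with
  | nil => exact absurd rfl h1
  | cons a t => simp at hk ⊢; omega

lemma head_tail_ne_zero (c b : ℕ) (l : List ℤ) (hl : l ∈ Pset c b) :
    l.headI ≠ 0 ∧ l.tail.headI ≠ 0 := by
  obtain ⟨x, m, y, rfl⟩ := decomp_of_two_le l (two_le_length c b l hl)
  obtain ⟨⟨h1, h2, h3⟩, _, _⟩ := (mem_Pset c b _).mp hl
  constructor
  · exact h3 x (by simp)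
  · cases m with
    | nil => exact h3 y (by simp)
    | cons h t => exact h3 h (by simp)


lemma length_cons_append (x y : ℤ) (m : List ℤ) :
    (x :: m ++ [y]).length = m.length + 2 := by simp

lemma mem_cons_append (z x y : ℤ) (m : List ℤ) :
    z ∈ x :: m ++ [y] ↔ z = x ∨ z ∈ m ∨ z = y := by
  simp only [List.cons_append, List.mem_cons, List.mem_append, List.mem_singleton]
  tauto

lemma image_bump (c b : ℕ) :
    bump '' Pset c b = {l | l ∈ Pset (c + 4) (b + 2) ∧ 2 ≤ l.headI.natAbs} := by
  ext l
  constructor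
  · rintro ⟨l', hl', rfl⟩
    obtain ⟨x, m, y, rfl⟩ := decomp_of_two_le l' (two_le_length c b l' hl')
    obtain ⟨⟨h1, h2, h3⟩, ⟨hc1, hb1⟩, hpal⟩ := (mem_Pset c b _).mp hl'
    have hx : x ≠ 0 := h3 x (by simp)
    have hy : y ≠ 0 := h3 y (by simp)
    rw [bump_eq]
    have hsc : signChanges ((x + x.sign) :: m ++ [y + y.sign]) = signChanges (x :: m ++ [y]) :=
      (signChanges_ends m x (x + x.sign) y (y + y.sign)
        (fun z => (mul_neg_congr x z hx).symm) (fun z => (mul_neg_congr' y z hy).symm)).symm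
    have habs : absSum ((x + x.sign) :: m ++ [y + y.sign]) = absSum (x :: m ++ [y]) + 2 := by
      rw [absSum_cons_append, absSum_cons_append, natAbs_add_sign x hx, natAbs_add_sign y hy]
      omega
    refine ⟨(mem_Pset _ _ _).mpr ⟨⟨by simp, ?_, ?_⟩, ⟨?_, ?_⟩, ?_⟩, ?_⟩
    · rw [length_cons_append]; rw [length_cons_append] at h2; exact h2
    · intro z hz
      rcases (mem_cons_append z _ _ m).mp hz with rfl | hz | rfl
      · exact add_sign_ne_zero x hx
      · exact h3 z ((mem_cons_append z _ _ m).mpr (Or.inr (Or.inl hz)))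
      · exact add_sign_ne_zero y hy
    · rw [hsc, habs]; push_cast; push_cast at hc1; omega
    · rw [hsc, habs]; push_cast; push_cast at hb1; omega
    · rcases hpal with hp | hp
      · obtain ⟨rfl, hm⟩ := (pal_iff x y m).mp hp
        exact Or.inl ((pal_iff _ _ _).mpr ⟨rfl, hm⟩)
      · obtain ⟨rfl, hm⟩ := (anti_iff x y m).mp hp
        exact Or.inr ((anti_iff _ _ _).mpr ⟨neg_add_sign x, hm⟩)
    · show 2 ≤ ((x + x.sign) :: m ++ [y + y.sign]).headI.natAbs
      rw [headI_cons_append, natAbs_add_sign x hx]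
      omega
  · rintro ⟨hl, hhead⟩
    obtain ⟨x, m, y, rfl⟩ := decomp_of_two_le l (two_le_length _ _ l hl)
    obtain ⟨⟨h1, h2, h3⟩, ⟨hc1, hb1⟩, hpal⟩ := (mem_Pset _ _ _).mp hl
    rw [headI_cons_append] at hhead
    have hy2 : 2 ≤ y.natAbs := by
      rcases hpal with hp | hp
      · obtain ⟨rfl, -⟩ := (pal_iff x y m).mp hp; exact hhead
      · obtain ⟨rfl, -⟩ := (anti_iff x y m).mp hp; rw [Int.natAbs_neg]; exact hhead
    have hxr := sub_sign_add_sign x hhead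
    have hyr := sub_sign_add_sign y hy2
    have hxn := sub_sign_ne_zero x hhead
    have hyn := sub_sign_ne_zero y hy2
    have e1 : ∀ z, (x - x.sign) * z < 0 ↔ x * z < 0 := fun z => by
      have h := mul_neg_congr (x - x.sign) z hxn
      rw [hxr] at h
      exact h.symm
    have e2 : ∀ z, z * (y - y.sign) < 0 ↔ z * y < 0 := fun z => by
      have h := mul_neg_congr' (y - y.sign) z hyn
      rw [hyr] at h
      exact h.symm
    have hsc : signChanges ((x - x.sign) :: m ++ [y - y.sign]) = signChanges (x :: m ++ [y]) :=
      signChanges_ends m (x - x.sign) x (y - y.sign) y (fun z => (e1 z)) (fun z => (e2 z))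
    have a1 : x.natAbs = (x - x.sign).natAbs + 1 := by
      conv_lhs => rw [← hxr]
      rw [natAbs_add_sign _ hxn]
    have a2 : y.natAbs = (y - y.sign).natAbs + 1 := by
      conv_lhs => rw [← hyr]
      rw [natAbs_add_sign _ hyn]
    have habs : absSum (x :: m ++ [y]) = absSum ((x - x.sign) :: m ++ [y - y.sign]) + 2 := by
      rw [absSum_cons_append, absSum_cons_append]
      omega
    refine ⟨(x - x.sign) :: m ++ [y - y.sign], (mem_Pset _ _ _).mpr ⟨⟨by simp, ?_, ?_⟩, ⟨?_, ?_⟩, ?_⟩, ?_⟩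
    · rw [length_cons_append]; rw [length_cons_append] at h2; exact h2
    · intro z hz
      rcases (mem_cons_append z _ _ m).mp hz with rfl | hz | rfl
      · exact hxn
      · exact h3 z ((mem_cons_append z _ _ m).mpr (Or.inr (Or.inl hz)))
      · exact hyn
    · rw [hsc]; push_cast; push_cast at hc1; omega
    · rw [hsc]; push_cast; push_cast at hb1; omega
    · rcases hpal with hp | hp
      · obtain ⟨rfl, hm⟩ := (pal_iff x y m).mp hp
        exact Or.inl ((pal_iff _ _ _).mpr ⟨rfl, hm⟩)
      · obtain ⟨rfl, hm⟩ := (anti_iff x y m).mp hp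
        exact Or.inr ((anti_iff _ _ _).mpr ⟨neg_sub_sign x, hm⟩)
    · rw [bump_eq, hxr, hyr]

lemma injOn_bump (c b : ℕ) : Set.InjOn bump (Pset c b) := by
  intro l1 hl1 l2 hl2 heq
  obtain ⟨x1, m1, y1, rfl⟩ := decomp_of_two_le l1 (two_le_length c b l1 hl1)
  obtain ⟨x2, m2, y2, rfl⟩ := decomp_of_two_le l2 (two_le_length c b l2 hl2)
  obtain ⟨⟨-, -, h3⟩, -, -⟩ := (mem_Pset c b _).mp hl1
  obtain ⟨⟨-, -, h3'⟩, -, -⟩ := (mem_Pset c b _).mp hl2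
  rw [bump_eq, bump_eq] at heq
  have hx1 : x1 ≠ 0 := h3 x1 (by simp)
  have hy1 : y1 ≠ 0 := h3 y1 (by simp)
  have hx2 : x2 ≠ 0 := h3' x2 (by simp)
  have hy2 : y2 ≠ 0 := h3' y2 (by simp)
  have hhead := List.head_eq_of_cons_eq heq
  have htail := List.tail_eq_of_cons_eq heq
  have hlen : m1.length = m2.length := by
    have := congrArg List.length htail
    simp at this
    exact this
  obtain ⟨hm, hy⟩ := List.append_inj htail hlen
  have hyy : y1 + y1.sign = y2 + y2.sign := by simpa using hy
  rw [add_sign_inj x1 x2 hx1 hx2 hhead, add_sign_inj y1 y2 hy1 hy2 hyy, hm]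


lemma getLastD_of_pal (l : List ℤ) (h : l.reverse = l) : l.getLastD 0 = l.headI := by
  have h1 : l.getLast? = l.head? := by
    rw [← List.head?_reverse, h]
  cases l with
  | nil => rfl
  | cons a t =>
    have h2 : (a :: t).getLastD 0 = ((a :: t).getLast?).getD 0 := by
      rw [List.getLastD_eq_getLast?]
    rw [h2, h1]
    rfl

lemma getLastD_of_anti (l : List ℤ) (h : l.reverse = l.map (fun z => -z)) :
    l.getLastD 0 = -l.headI := by
  have h1 : l.getLast? = (l.map (fun z => -z)).head? := by
    rw [← List.head?_reverse, h]
  cases l with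
  | nil => simp
  | cons a t =>
    have h2 : (a :: t).getLastD 0 = ((a :: t).getLast?).getD 0 := by
      rw [List.getLastD_eq_getLast?]
    rw [h2, h1]
    rfl

lemma isign_ne_zero (x : ℤ) (hx : x ≠ 0) : x.sign ≠ 0 := by
  have := natAbs_sign x hx
  omega

lemma neg_sign_ne_zero (x : ℤ) (hx : x ≠ 0) : -x.sign ≠ 0 := by
  have := natAbs_sign x hx
  omega

lemma neg_sign_mul_self_neg (x : ℤ) (hx : x ≠ 0) : (-x.sign) * x < 0 := by
  rw [neg_mul]
  have := sign_mul_self_pos x hx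
  linarith

lemma mul_neg_sign_self_neg (x : ℤ) (hx : x ≠ 0) : x * (-x.sign) < 0 := by
  rw [mul_neg]
  have := mul_self_sign_pos x hx
  linarith

lemma extS_eq (x y : ℤ) (m : List ℤ) :
    extS (x :: m ++ [y]) = x.sign :: (x :: m ++ [y]) ++ [y.sign] := by
  rw [extS, headI_cons_append, getLastD_cons_append]

lemma extO_eq (x y : ℤ) (m : List ℤ) :
    extO (x :: m ++ [y]) = (-x.sign) :: (x :: m ++ [y]) ++ [-y.sign] := by
  rw [extO, headI_cons_append, getLastD_cons_append]

lemma even_add_two' (n : ℕ) (h : Even n) : Even (n + 2) := by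
  rcases h with ⟨k, hk⟩
  exact ⟨k + 1, by omega⟩

lemma image_extS (c b : ℕ) (hc : 2 ≤ c) :
    extS '' Pset c b = {l | l ∈ Pset (c + 4) (b + 2) ∧ l.headI.natAbs = 1 ∧
      0 < l.headI * l.tail.headI} := by
  ext l
  constructor
  · rintro ⟨l', hl', rfl⟩
    obtain ⟨x, m, y, rfl⟩ := decomp_of_two_le l' (two_le_length c b l' hl')
    obtain ⟨⟨h1, h2, h3⟩, ⟨hc1, hb1⟩, hpal⟩ := (mem_Pset c b _).mp hl'
    have hx : x ≠ 0 := h3 x (by simp)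
    have hy : y ≠ 0 := h3 y (by simp)
    rw [extS_eq]
    have hM : x :: m ++ [y] ≠ [] := by simp
    have hsc : signChanges (x.sign :: (x :: m ++ [y]) ++ [y.sign])
        = signChanges (x :: m ++ [y]) := by
      rw [signChanges_cons_append _ _ _ hM, headI_cons_append, getLastD_cons_append,
        if_neg (not_lt.mpr (le_of_lt (sign_mul_self_pos x hx))),
        if_neg (not_lt.mpr (le_of_lt (mul_self_sign_pos y hy)))]
      omega
    have habs : absSum (x.sign :: (x :: m ++ [y]) ++ [y.sign])
        = absSum (x :: m ++ [y]) + 2 := by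
      rw [absSum_cons_append, natAbs_sign x hx, natAbs_sign y hy]
      omega
    refine ⟨(mem_Pset _ _ _).mpr ⟨⟨by simp, ?_, ?_⟩, ⟨?_, ?_⟩, ?_⟩, ?_, ?_⟩
    · rw [length_cons_append]
      exact even_add_two' _ h2
    · intro z hz
      rcases (mem_cons_append z _ _ _).mp hz with rfl | hz | rfl
      · exact isign_ne_zero x hx
      · exact h3 z hz
      · exact isign_ne_zero y hy
    · rw [hsc]; push_cast; push_cast at hc1; omega
    · rw [hsc]; push_cast; push_cast at hb1; omega
    · rcases hpal with hp | hp
      · obtain ⟨hyx, -⟩ := (pal_iff x y m).mp hp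
        exact Or.inl ((pal_iff _ _ _).mpr ⟨by rw [hyx], hp⟩)
      · obtain ⟨hyx, -⟩ := (anti_iff x y m).mp hp
        exact Or.inr ((anti_iff _ _ _).mpr ⟨by rw [hyx, Int.sign_neg], hp⟩)
    · rw [headI_cons_append, natAbs_sign x hx]
    · show 0 < (x.sign :: (x :: m ++ [y]) ++ [y.sign]).headI *
        (x.sign :: (x :: m ++ [y]) ++ [y.sign]).tail.headI
      have e1 : (x.sign :: (x :: m ++ [y]) ++ [y.sign]).headI = x.sign := rfl
      have e2 : (x.sign :: (x :: m ++ [y]) ++ [y.sign]).tail.headI = x := rfl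
      rw [e1, e2]
      exact sign_mul_self_pos x hx
  · rintro ⟨hl, hu, hpos⟩
    obtain ⟨x, m, y, rfl⟩ := decomp_of_two_le l (two_le_length _ _ l hl)
    obtain ⟨⟨h1, h2, h3⟩, ⟨hc1, hb1⟩, hpal⟩ := (mem_Pset _ _ _).mp hl
    rw [headI_cons_append] at hu
    have hx : x ≠ 0 := h3 x (by simp)
    have hy : y ≠ 0 := h3 y (by simp)
    cases m with
    | nil =>
      exfalso
      have e2 : (x :: ([] : List ℤ) ++ [y]).tail.headI = y := rfl
      rw [headI_cons_append, e2] at hpos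
      have hyx : y = x := by
        rcases hpal with hp | hp
        · exact ((pal_iff x y []).mp hp).1
        · obtain ⟨rfl, -⟩ := (anti_iff x y []).mp hp
          nlinarith
      subst hyx
      have hsc : signChanges (y :: ([] : List ℤ) ++ [y]) = 0 := by
        show signChanges [y, y] = 0
        rw [signChanges_pair, if_neg (not_lt.mpr (le_of_lt hpos))]
      have habs : absSum (y :: ([] : List ℤ) ++ [y]) = 2 := by
        rw [absSum_cons_append]
        show y.natAbs + absSum [] + y.natAbs = 2
        have : absSum ([] : List ℤ) = 0 := rfl
        omega
      rw [hsc, habs] at hc1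
      push_cast at hc1
      omega
    | cons h t =>
      have e2 : (x :: (h :: t) ++ [y]).tail.headI = h := rfl
      rw [headI_cons_append, e2] at hpos
      have hh : h ≠ 0 := h3 h (by simp)
      have hxs : x = h.sign := unit_eq_sign_of_pos x h hu hpos
      have hyn : y.natAbs = 1 := by
        rcases hpal with hp | hp
        · obtain ⟨rfl, -⟩ := (pal_iff x y (h :: t)).mp hp; exact hu
        · obtain ⟨rfl, -⟩ := (anti_iff x y (h :: t)).mp hp; rw [Int.natAbs_neg]; exact hu
      have hgl : (h :: t).getLastD 0 * y > 0 ∧ y = ((h :: t).getLastD 0).sign ∧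
          IsPalOrAnti (h :: t) := by
        rcases hpal with hp | hp
        · obtain ⟨rfl, hm⟩ := (pal_iff x y (h :: t)).mp hp
          rw [getLastD_of_pal _ hm, hxs]
          exact ⟨mul_self_sign_pos h hh, rfl, Or.inl hm⟩
        · obtain ⟨rfl, hm⟩ := (anti_iff x y (h :: t)).mp hp
          rw [getLastD_of_anti _ hm, hxs]
          refine ⟨?_, ?_, Or.inr hm⟩
          · show (-h) * (-h.sign) > 0
            rw [neg_mul_neg]
            exact mul_self_sign_pos h hh
          · show -h.sign = (-h).sign
            rw [Int.sign_neg]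
      obtain ⟨hgl1, hgl2, hglpal⟩ := hgl
      have hsc : signChanges (x :: (h :: t) ++ [y]) = signChanges (h :: t) := by
        rw [signChanges_cons_append _ _ _ (by simp)]
        show signChanges (h :: t) + (if x * h < 0 then 1 else 0)
          + (if (h :: t).getLastD 0 * y < 0 then 1 else 0) = signChanges (h :: t)
        rw [if_neg (not_lt.mpr (le_of_lt hpos)), if_neg (not_lt.mpr (le_of_lt hgl1))]
        omega
      have habs : absSum (x :: (h :: t) ++ [y]) = absSum (h :: t) + 2 := by
        rw [absSum_cons_append]
        omega
      refine ⟨h :: t, (mem_Pset _ _ _).mpr ⟨⟨by simp, ?_, ?_⟩, ⟨?_, ?_⟩, ?_⟩, ?_⟩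
      · rw [length_cons_append] at h2
        rcases h2 with ⟨k, hk⟩
        exact ⟨k - 1, by simp at hk ⊢; omega⟩
      · intro z hz
        exact h3 z (by rw [mem_cons_append]; exact Or.inr (Or.inl hz))
      · rw [hsc, habs] at hc1; push_cast at hc1 ⊢; omega
      · rw [hsc, habs] at hb1; push_cast at hb1 ⊢; omega
      · exact hglpal
      · rw [extS]
        show ((h :: t).headI.sign :: (h :: t) ++ [((h :: t).getLastD 0).sign]) = _
        have : (h :: t).headI = h := rfl
        rw [this, ← hxs, ← hgl2]


lemma image_extO (c b : ℕ) (hc : 2 ≤ c) :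
    extO '' Pset c b = {l | l ∈ Pset (c + 2) b ∧ l.headI.natAbs = 1 ∧
      l.headI * l.tail.headI < 0} := by
  ext l
  constructor
  · rintro ⟨l', hl', rfl⟩
    obtain ⟨x, m, y, rfl⟩ := decomp_of_two_le l' (two_le_length c b l' hl')
    obtain ⟨⟨h1, h2, h3⟩, ⟨hc1, hb1⟩, hpal⟩ := (mem_Pset c b _).mp hl'
    have hx : x ≠ 0 := h3 x (by simp)
    have hy : y ≠ 0 := h3 y (by simp)
    rw [extO_eq]
    have hM : x :: m ++ [y] ≠ [] := by simp
    have hsc : signChanges ((-x.sign) :: (x :: m ++ [y]) ++ [-y.sign])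
        = signChanges (x :: m ++ [y]) + 2 := by
      rw [signChanges_cons_append _ _ _ hM, headI_cons_append, getLastD_cons_append,
        if_pos (neg_sign_mul_self_neg x hx), if_pos (mul_neg_sign_self_neg y hy)]
    have habs : absSum ((-x.sign) :: (x :: m ++ [y]) ++ [-y.sign])
        = absSum (x :: m ++ [y]) + 2 := by
      rw [absSum_cons_append, Int.natAbs_neg, Int.natAbs_neg, natAbs_sign x hx,
        natAbs_sign y hy]
      omega
    refine ⟨(mem_Pset _ _ _).mpr ⟨⟨by simp, ?_, ?_⟩, ⟨?_, ?_⟩, ?_⟩, ?_, ?_⟩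
    · rw [length_cons_append]
      exact even_add_two' _ h2
    · intro z hz
      rcases (mem_cons_append z _ _ _).mp hz with rfl | hz | rfl
      · exact neg_sign_ne_zero x hx
      · exact h3 z hz
      · exact neg_sign_ne_zero y hy
    · rw [hsc]; push_cast; push_cast at hc1; omega
    · rw [hsc]; push_cast; push_cast at hb1; omega
    · rcases hpal with hp | hp
      · obtain ⟨hyx, -⟩ := (pal_iff x y m).mp hp
        exact Or.inl ((pal_iff _ _ _).mpr ⟨by rw [hyx], hp⟩)
      · obtain ⟨hyx, -⟩ := (anti_iff x y m).mp hp
        exact Or.inr ((anti_iff _ _ _).mpr ⟨by rw [hyx, Int.sign_neg], hp⟩)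
    · show ((-x.sign) :: (x :: m ++ [y]) ++ [-y.sign]).headI.natAbs = 1
      have e1 : ((-x.sign) :: (x :: m ++ [y]) ++ [-y.sign]).headI = -x.sign := rfl
      rw [e1, Int.natAbs_neg, natAbs_sign x hx]
    · show ((-x.sign) :: (x :: m ++ [y]) ++ [-y.sign]).headI *
        ((-x.sign) :: (x :: m ++ [y]) ++ [-y.sign]).tail.headI < 0
      have e1 : ((-x.sign) :: (x :: m ++ [y]) ++ [-y.sign]).headI = -x.sign := rfl
      have e2 : ((-x.sign) :: (x :: m ++ [y]) ++ [-y.sign]).tail.headI = x := rfl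
      rw [e1, e2]
      exact neg_sign_mul_self_neg x hx
  · rintro ⟨hl, hu, hneg⟩
    obtain ⟨x, m, y, rfl⟩ := decomp_of_two_le l (two_le_length _ _ l hl)
    obtain ⟨⟨h1, h2, h3⟩, ⟨hc1, hb1⟩, hpal⟩ := (mem_Pset _ _ _).mp hl
    rw [headI_cons_append] at hu
    have hx : x ≠ 0 := h3 x (by simp)
    have hy : y ≠ 0 := h3 y (by simp)
    cases m with
    | nil =>
      exfalso
      have e2 : (x :: ([] : List ℤ) ++ [y]).tail.headI = y := rfl
      rw [headI_cons_append, e2] at hneg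
      have hxx : 0 < x * x := mul_self_pos.mpr hx
      have hyx : y = -x := by
        rcases hpal with hp | hp
        · obtain ⟨rfl, -⟩ := (pal_iff x y []).mp hp
          nlinarith
        · exact ((anti_iff x y []).mp hp).1
      subst hyx
      have hsc : signChanges (x :: ([] : List ℤ) ++ [-x]) = 1 := by
        show signChanges [x, -x] = 1
        rw [signChanges_pair, if_pos (by nlinarith)]
      have habs : absSum (x :: ([] : List ℤ) ++ [-x]) = 2 := by
        rw [absSum_cons_append]
        show x.natAbs + absSum [] + (-x).natAbs = 2
        have : absSum ([] : List ℤ) = 0 := rfl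
        rw [Int.natAbs_neg]
        omega
      rw [hsc, habs] at hc1
      push_cast at hc1
      omega
    | cons h t =>
      have e2 : (x :: (h :: t) ++ [y]).tail.headI = h := rfl
      rw [headI_cons_append, e2] at hneg
      have hh : h ≠ 0 := h3 h (by simp)
      have hxs : x = -h.sign := unit_eq_neg_sign_of_neg x h hu hneg
      have hgl : (h :: t).getLastD 0 * y < 0 ∧ y = -((h :: t).getLastD 0).sign ∧
          IsPalOrAnti (h :: t) := by
        rcases hpal with hp | hp
        · obtain ⟨rfl, hm⟩ := (pal_iff x y (h :: t)).mp hp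
          rw [getLastD_of_pal _ hm, hxs]
          exact ⟨mul_neg_sign_self_neg h hh, rfl, Or.inl hm⟩
        · obtain ⟨rfl, hm⟩ := (anti_iff x y (h :: t)).mp hp
          rw [getLastD_of_anti _ hm, hxs]
          refine ⟨?_, ?_, Or.inr hm⟩
          · show (-h) * (-(-h.sign)) < 0
            rw [neg_neg, neg_mul]
            have := mul_self_sign_pos h hh
            linarith
          · show -(-h.sign) = -(-h).sign
            rw [Int.sign_neg]
      obtain ⟨hgl1, hgl2, hglpal⟩ := hgl
      have hsc : signChanges (x :: (h :: t) ++ [y]) = signChanges (h :: t) + 2 := by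
        rw [signChanges_cons_append _ _ _ (by simp)]
        show signChanges (h :: t) + (if x * h < 0 then 1 else 0)
          + (if (h :: t).getLastD 0 * y < 0 then 1 else 0) = signChanges (h :: t) + 2
        rw [if_pos hneg, if_pos hgl1]
      have hyn : y.natAbs = 1 := by
        rw [hgl2, Int.natAbs_neg]
        exact natAbs_sign _ (by
          intro h0
          rw [h0] at hgl1
          simp at hgl1)
      have habs : absSum (x :: (h :: t) ++ [y]) = absSum (h :: t) + 2 := by
        rw [absSum_cons_append]
        omega
      refine ⟨h :: t, (mem_Pset _ _ _).mpr ⟨⟨by simp, ?_, ?_⟩, ⟨?_, ?_⟩, ?_⟩, ?_⟩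
      · rw [length_cons_append] at h2
        rcases h2 with ⟨k, hk⟩
        exact ⟨k - 1, by simp at hk ⊢; omega⟩
      · intro z hz
        exact h3 z (by rw [mem_cons_append]; exact Or.inr (Or.inl hz))
      · rw [hsc, habs] at hc1; push_cast at hc1 ⊢; omega
      · rw [hsc, habs] at hb1; push_cast at hb1 ⊢; omega
      · exact hglpal
      · rw [extO]
        show (-(h :: t).headI.sign :: (h :: t) ++ [-((h :: t).getLastD 0).sign]) = _
        have e3 : (h :: t).headI = h := rfl
        rw [e3, ← hxs, ← hgl2]

lemma injOn_extS (c b : ℕ) : Set.InjOn extS (Pset c b) := by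
  intro l1 hl1 l2 hl2 heq
  rw [extS, extS] at heq
  have htail := List.tail_eq_of_cons_eq heq
  have hlen : l1.length = l2.length := by
    have := congrArg List.length htail
    simp at this
    exact this
  exact (List.append_inj htail hlen).1

lemma injOn_extO (c b : ℕ) : Set.InjOn extO (Pset c b) := by
  intro l1 hl1 l2 hl2 heq
  rw [extO, extO] at heq
  have htail := List.tail_eq_of_cons_eq heq
  have hlen : l1.length = l2.length := by
    have := congrArg List.length htail
    simp at this
    exact this
  exact (List.append_inj htail hlen).1


lemma finite_bounded_lists (k : ℕ) (s : Set ℤ) (hs : s.Finite) :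
    {l : List ℤ | l.length ≤ k ∧ ∀ x ∈ l, x ∈ s}.Finite := by
  induction k with
  | zero =>
    apply Set.Finite.subset (Set.finite_singleton ([] : List ℤ))
    rintro l ⟨hlen, -⟩
    simp only [Set.mem_singleton_iff]
    exact List.eq_nil_of_length_eq_zero (by omega)
  | succ n ih =>
    apply Set.Finite.subset
      (Set.Finite.insert [] (Set.Finite.image (fun p : ℤ × List ℤ => p.1 :: p.2) (hs.prod ih)))
    rintro l ⟨hlen, hmem⟩
    cases l with
    | nil => exact Set.mem_insert _ _
    | cons a t =>
      refine Set.mem_insert_of_mem _ ⟨(a, t), ⟨hmem a (by simp), ?_, ?_⟩, rfl⟩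
      · show t.length ≤ n
        simp only [List.length_cons] at hlen
        omega
      · show ∀ x ∈ t, x ∈ s
        intro x hx; exact hmem x (by simp [hx])

lemma length_le_absSum (l : List ℤ) (h : ∀ x ∈ l, x ≠ 0) : l.length ≤ absSum l := by
  induction l with
  | nil => simp [absSum]
  | cons a t ih =>
    rw [absSum_cons]
    have ha : a ≠ 0 := h a (by simp)
    have : 1 ≤ a.natAbs := by omega
    have := ih (fun x hx => h x (by simp [hx]))
    simp only [List.length_cons]
    omega

lemma mem_natAbs_le_absSum (l : List ℤ) (x : ℤ) (hx : x ∈ l) : x.natAbs ≤ absSum l :=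
  List.single_le_sum (fun _ _ => Nat.zero_le _) _ (List.mem_map_of_mem (f := Int.natAbs) hx)

lemma signChanges_le_length (l : List ℤ) : signChanges l ≤ l.length - 1 := by
  have h1 : signChanges l ≤ (l.zip l.tail).length := List.length_filter_le _ _
  rw [List.length_zip, List.length_tail] at h1
  omega

lemma Pset_finite (c b : ℕ) : (Pset c b).Finite := by
  apply Set.Finite.subset (finite_bounded_lists c {x : ℤ | x.natAbs ≤ c} ?_)
  · intro l hl
    obtain ⟨⟨h1, h2, h3⟩, ⟨hc1, hb1⟩, -⟩ := (mem_Pset c b l).mp hl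
    have hlen := length_le_absSum l h3
    have hsc := signChanges_le_length l
    have hlp : 1 ≤ l.length := by
      cases l with
      | nil => exact absurd rfl h1
      | cons a t => simp
    have hS : absSum l ≤ c := by push_cast at hc1; omega
    refine ⟨by omega, fun x hx => ?_⟩
    have := mem_natAbs_le_absSum l x hx
    simp only [Set.mem_setOf_eq]
    omega
  · apply Set.Finite.subset (Set.finite_Icc (-(c : ℤ)) c)
    intro x hx
    simp only [Set.mem_setOf_eq] at hx
    simp only [Set.mem_Icc]
    omega

lemma Pset_empty_of_b_le_one (c b : ℕ) (hb : b ≤ 1) : Pset c b = ∅ := by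
  rw [Set.eq_empty_iff_forall_notMem]
  intro l hl
  obtain ⟨⟨h1, h2, h3⟩, ⟨hc1, hb1⟩, -⟩ := (mem_Pset c b l).mp hl
  have hlen := length_le_absSum l h3
  have hsc := signChanges_le_length l
  have hlp : 1 ≤ l.length := by
    cases l with
    | nil => exact absurd rfl h1
    | cons a t => simp
  push_cast at hb1
  omega

theorem ep_recursion (c b : ℕ) (hc : 7 ≤ c) :
    ep c b = ep (c - 2) b + 2 * ep (c - 4) (b - 2) := by
  rcases Nat.lt_or_ge b 2 with hb | hb
  · have h1 : Pset c b = ∅ := Pset_empty_of_b_le_one c b (by omega)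
    have h2 : Pset (c - 2) b = ∅ := Pset_empty_of_b_le_one _ b (by omega)
    have h3 : Pset (c - 4) (b - 2) = ∅ := Pset_empty_of_b_le_one _ _ (by omega)
    rw [ep_eq_Pset, ep_eq_Pset, ep_eq_Pset, h1, h2, h3]
    simp
  · set c4 := c - 4 with hc4def
    set b2 := b - 2 with hb2def
    have hc4 : c = c4 + 4 := by omega
    have hc2 : c - 2 = c4 + 2 := by omega
    have hb2 : b = b2 + 2 := by omega
    have hcc : 2 ≤ c4 := by omega
    have hcc2 : 2 ≤ c4 + 2 := by omega
    have hP : (Pset (c4 + 4) (b2 + 2)).Finite := Pset_finite _ _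
    have hsplit : Pset (c4 + 4) (b2 + 2) =
        (bump '' Pset c4 b2) ∪ ((extS '' Pset c4 b2) ∪ (extO '' Pset (c4 + 2) (b2 + 2))) := by
      rw [image_bump, image_extS c4 b2 hcc, image_extO (c4 + 2) (b2 + 2) hcc2]
      have hadd : c4 + 2 + 2 = c4 + 4 := by omega
      rw [hadd]
      ext l
      constructor
      · intro hl
        obtain ⟨hne, hne2⟩ := head_tail_ne_zero _ _ l hl
        have h1 : 1 ≤ l.headI.natAbs := by omega
        rcases Nat.lt_or_ge l.headI.natAbs 2 with hsm | hbig
        · have hu : l.headI.natAbs = 1 := by omega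
          have hm : l.headI * l.tail.headI ≠ 0 := mul_ne_zero hne hne2
          rcases lt_or_gt_of_ne hm with hlt | hgt
          · exact Or.inr (Or.inr ⟨hl, hu, hlt⟩)
          · exact Or.inr (Or.inl ⟨hl, hu, hgt⟩)
        · exact Or.inl ⟨hl, hbig⟩
      · rintro (⟨hl, -⟩ | ⟨hl, -⟩ | ⟨hl, -⟩) <;> exact hl
    have hd1 : Disjoint (bump '' Pset c4 b2)
        ((extS '' Pset c4 b2) ∪ (extO '' Pset (c4 + 2) (b2 + 2))) := by
      rw [image_bump, image_extS c4 b2 hcc, image_extO (c4 + 2) (b2 + 2) hcc2]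
      rw [Set.disjoint_left]
      rintro l ⟨-, hbig⟩ (⟨-, hu, -⟩ | ⟨-, hu, -⟩) <;> omega
    have hd2 : Disjoint (extS '' Pset c4 b2) (extO '' Pset (c4 + 2) (b2 + 2)) := by
      rw [image_extS c4 b2 hcc, image_extO (c4 + 2) (b2 + 2) hcc2]
      rw [Set.disjoint_left]
      rintro l ⟨-, -, hpos⟩ ⟨-, -, hneg⟩
      exact absurd hpos (not_lt.mpr (le_of_lt hneg))
    have hf1 : (bump '' Pset c4 b2).Finite :=
      Set.Finite.subset hP (by rw [hsplit]; exact Set.subset_union_left)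
    have hf2 : (extS '' Pset c4 b2).Finite :=
      Set.Finite.subset hP (by
        rw [hsplit]
        exact subset_trans Set.subset_union_left Set.subset_union_right)
    have hf3 : (extO '' Pset (c4 + 2) (b2 + 2)).Finite :=
      Set.Finite.subset hP (by
        rw [hsplit]
        exact subset_trans Set.subset_union_right Set.subset_union_right)
    have e1 : ep c b = (Pset (c4 + 4) (b2 + 2)).ncard := by
      rw [ep_eq_Pset, ← hc4, ← hb2]
    have e2 : ep (c - 2) b = (Pset (c4 + 2) (b2 + 2)).ncard := by
      rw [ep_eq_Pset, hc2, ← hb2]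
    have e3 : ep (c - 4) (b - 2) = (Pset c4 b2).ncard := by
      rw [ep_eq_Pset]
    rw [e1, e2, e3, hsplit, Set.ncard_union_eq hd1 hf1 (Set.Finite.union hf2 hf3),
      Set.ncard_union_eq hd2 hf2 hf3,
      Set.ncard_image_of_injOn (injOn_bump c4 b2),
      Set.ncard_image_of_injOn (injOn_extS c4 b2),
      Set.ncard_image_of_injOn (injOn_extO (c4 + 2) (b2 + 2))]
    ring
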